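/- Fix p ∈ [1,2] and C_p > 0, and let r_i be nonnegative with r_i ≤ 2 and i^{p/2} r_i → C_p. For a probability vector q on a finite set 𝒳 of size k, define F_m(q) = Σ_{x∈𝒳} Σ_{i=0}^m C(m,i) q(x)^{i+p} (1−q(x))^{m−i} r_i. Then max over probability vectors q of F_m(q) satisfies m^{p/2} · max_q F_m(q) → C_p · k^{1−p/2} as m → ∞. -/

import Mathlib

open Filter Set Real

namespace Stmt17


noncomputable def bw (m i : ℕ) (x : ℝ) : ℝ := (m.choose i : ℝ) * x ^ i * (1 - x) ^ (m - i)

lemma bw_eval (m i : ℕ) (x : ℝ) : (bernsteinPolynomial ℝ m i).eval x = bw m i x := by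
  simp [bernsteinPolynomial, bw]

lemma bw_nonneg {m i : ℕ} {x : ℝ} (h0 : 0 ≤ x) (h1 : x ≤ 1) : 0 ≤ bw m i x := by
  have h2 : (0:ℝ) ≤ 1 - x := by linarith
  unfold bw; positivity

lemma sum_bw (m : ℕ) (x : ℝ) : ∑ i ∈ Finset.range (m+1), bw m i x = 1 := by
  have h := congrArg (Polynomial.eval x) (bernsteinPolynomial.sum ℝ m)
  simpa [Polynomial.eval_finset_sum, bw_eval] using h

lemma sum_sq_bw (m : ℕ) (x : ℝ) :
    ∑ i ∈ Finset.range (m+1), ((m:ℝ)*x - i)^2 * bw m i x = m * x * (1-x) := by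
  have h := congrArg (Polynomial.eval x) (bernsteinPolynomial.variance ℝ m)
  simpa [Polynomial.eval_finset_sum, bw_eval, nsmul_eq_mul, mul_assoc] using h

lemma cheb (m : ℕ) (x t : ℝ) (h0 : 0 ≤ x) (h1 : x ≤ 1) (ht : 0 < t) :
    ∑ i ∈ (Finset.range (m+1)).filter (fun i : ℕ => t ≤ |(m:ℝ)*x - (i:ℝ)|), bw m i x
      ≤ m * x * (1-x) / t^2 := by
  have step1 : ∑ i ∈ (Finset.range (m+1)).filter (fun i : ℕ => t ≤ |(m:ℝ)*x - (i:ℝ)|), bw m i x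
      ≤ ∑ i ∈ (Finset.range (m+1)).filter (fun i : ℕ => t ≤ |(m:ℝ)*x - (i:ℝ)|),
        (((m:ℝ)*x - i)^2 / t^2) * bw m i x := by
    apply Finset.sum_le_sum
    intro i hi
    have h2 : t ≤ |(m:ℝ)*x - i| := (Finset.mem_filter.mp hi).2
    have h3 : t^2 ≤ ((m:ℝ)*x - i)^2 := by
      have := pow_le_pow_left₀ ht.le h2 2
      rwa [sq_abs] at this
    have h4 : (0:ℝ) ≤ bw m i x := bw_nonneg h0 h1
    have h5 : (1:ℝ) ≤ ((m:ℝ)*x - i)^2 / t^2 := by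
      rw [le_div_iff₀ (by positivity)]
      linarith
    nlinarith
  have step2 : ∑ i ∈ (Finset.range (m+1)).filter (fun i : ℕ => t ≤ |(m:ℝ)*x - (i:ℝ)|),
        (((m:ℝ)*x - i)^2 / t^2) * bw m i x
      ≤ ∑ i ∈ Finset.range (m+1), (((m:ℝ)*x - i)^2 / t^2) * bw m i x := by
    apply Finset.sum_le_sum_of_subset_of_nonneg (Finset.filter_subset _ _)
    intro i _ _
    have h4 : (0:ℝ) ≤ bw m i x := bw_nonneg h0 h1
    positivity
  have step3 : ∑ i ∈ Finset.range (m+1), (((m:ℝ)*x - i)^2 / t^2) * bw m i x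
      = m * x * (1-x) / t^2 := by
    rw [← sum_sq_bw m x, Finset.sum_div]
    apply Finset.sum_congr rfl
    intro i _
    ring
  linarith

lemma sum_bw_div (m : ℕ) (x : ℝ) (h0 : 0 < x) (h1 : x ≤ 1) :
    ∑ i ∈ Finset.range (m+1), bw m i x * ((i:ℝ)+1)⁻¹ ≤ (((m:ℝ)+1) * x)⁻¹ := by
  have key : ∀ i, bw m i x * ((i:ℝ)+1)⁻¹ * (((m:ℝ)+1) * x) = bw (m+1) (i+1) x := by
    intro i
    have hc : ((m+1 : ℕ).choose (i+1) : ℝ) * ((i:ℝ)+1) = ((m:ℝ)+1) * (m.choose i : ℝ) := by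
      have := Nat.add_one_mul_choose_eq m i
      have h2 : ((m+1) * m.choose i : ℕ) = ((m+1).choose (i+1) * (i+1) : ℕ) := this
      exact_mod_cast h2.symm
    unfold bw
    have hsub : m + 1 - (i + 1) = m - i := by omega
    rw [hsub]
    have hi1 : ((i:ℝ)+1) ≠ 0 := by positivity
    field_simp
    linear_combination (-(x ^ (i+1) * (1 - x) ^ (m - i))) * hc
  have hsum : ∑ i ∈ Finset.range (m+1), bw (m+1) (i+1) x ≤ 1 := by
    have h := sum_bw (m+1) x
    rw [Finset.sum_range_succ'] at h
    have hb : 0 ≤ bw (m+1) 0 x := bw_nonneg h0.le h1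
    linarith
  have hpos : (0:ℝ) < ((m:ℝ)+1) * x := by positivity
  calc ∑ i ∈ Finset.range (m+1), bw m i x * ((i:ℝ)+1)⁻¹
      = ∑ i ∈ Finset.range (m+1), bw (m+1) (i+1) x / (((m:ℝ)+1) * x) := by
        apply Finset.sum_congr rfl
        intro i _
        rw [← key i]
        field_simp
    _ = (∑ i ∈ Finset.range (m+1), bw (m+1) (i+1) x) / (((m:ℝ)+1) * x) := by
        rw [Finset.sum_div]
    _ ≤ 1 / (((m:ℝ)+1) * x) := by
        gcongr
    _ = (((m:ℝ)+1) * x)⁻¹ := one_div _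



lemma jensen_concave {ι : Type*} (t : Finset ι) (w z : ι → ℝ) (hw : ∀ i ∈ t, 0 ≤ w i)
    (hw1 : ∑ i ∈ t, w i = 1) (hz : ∀ i ∈ t, 0 ≤ z i) {s : ℝ} (hs0 : 0 < s) (hs1 : s ≤ 1) :
    ∑ i ∈ t, w i * z i ^ s ≤ (∑ i ∈ t, w i * z i) ^ s := by
  have hp : 1 ≤ 1/s := by rw [le_div_iff₀ hs0]; linarith
  have key := Real.arith_mean_le_rpow_mean t w (fun i => z i ^ s) hw hw1
    (fun i hi => Real.rpow_nonneg (hz i hi) s) hp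
  have heq : ∑ i ∈ t, w i * (z i ^ s) ^ (1/s) = ∑ i ∈ t, w i * z i := by
    apply Finset.sum_congr rfl
    intro i hi
    rw [← Real.rpow_mul (hz i hi), mul_one_div_cancel hs0.ne', Real.rpow_one]
  rw [heq, one_div_one_div] at key
  exact key

lemma xa_bound {x : ℝ} (h0 : 0 ≤ x) (h1 : x ≤ 1) {a : ℝ} (ha : 0 < a) (b : ℕ) :
    x ^ a * (1-x) ^ b ≤ (a / (a + b)) ^ a := by
  have hab : (0:ℝ) < a + b := by positivity
  have hw1 : (0:ℝ) < a / (a+(b:ℝ)) := by positivity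
  rcases eq_or_lt_of_le h0 with h|hx0
  · rw [← h, Real.zero_rpow ha.ne', zero_mul]
    positivity
  rcases Nat.eq_zero_or_pos b with hb|hb
  · subst hb
    simp only [Nat.cast_zero, add_zero, pow_zero, mul_one, div_self (ne_of_gt ha),
      Real.one_rpow]
    exact Real.rpow_le_one h0 h1 ha.le
  rcases eq_or_lt_of_le h1 with h1'|h1'
  · rw [h1', sub_self, zero_pow (by omega), mul_zero]
    positivity
  -- now 0 < x < 1, 1 ≤ b
  have h1x : (0:ℝ) < 1 - x := by linarith
  set w₁ : ℝ := a/(a+(b:ℝ)) with hw₁def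
  set w₂ : ℝ := (b:ℝ)/(a+(b:ℝ)) with hw₂def
  have hw2 : (0:ℝ) < w₂ := by
    apply div_pos _ hab
    exact_mod_cast Nat.cast_pos.mpr hb
  have hsumw : w₁ + w₂ = 1 := by rw [hw₁def, hw₂def]; field_simp
  have key := Real.geom_mean_le_arith_mean2_weighted hw1.le hw2.le
      (div_nonneg h0 hw1.le) (div_nonneg h1x.le hw2.le) hsumw
  have harith : w₁ * (x / w₁) + w₂ * ((1-x) / w₂) = 1 := by
    field_simp
    ring
  rw [harith] at key
  rw [Real.div_rpow h0 hw1.le, Real.div_rpow h1x.le hw2.le] at key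
  have hpow1 : (0:ℝ) < w₁ ^ w₁ := Real.rpow_pos_of_pos hw1 _
  have hpow2 : (0:ℝ) < w₂ ^ w₂ := Real.rpow_pos_of_pos hw2 _
  have key2 : x ^ w₁ * (1-x) ^ w₂ ≤ w₁ ^ w₁ * w₂ ^ w₂ := by
    rw [div_mul_div_comm] at key
    rw [div_le_one (by positivity)] at key
    linarith
  have key3 : x ^ w₁ * (1-x) ^ w₂ ≤ w₁ ^ w₁ := by
    refine key2.trans ?_
    have : w₂ ^ w₂ ≤ 1 := Real.rpow_le_one hw2.le (by
      rw [hw₂def, div_le_one hab]; linarith) hw2.le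
    nlinarith
  have key4 := Real.rpow_le_rpow (by positivity) key3 hab.le
  rw [Real.mul_rpow (by positivity) (by positivity), ← Real.rpow_mul h0,
    ← Real.rpow_mul h1x.le, ← Real.rpow_mul hw1.le] at key4
  have e1 : w₁ * (a + (b:ℝ)) = a := by rw [hw₁def]; field_simp
  have e2 : w₂ * (a + (b:ℝ)) = (b:ℝ) := by rw [hw₂def]; field_simp
  rw [e1, e2, Real.rpow_natCast] at key4
  exact key4

set_option maxHeartbeats 1000000 in
lemma upper {p Cp : ℝ} {r : ℕ → ℝ} (hp1 : 1 ≤ p) (hp2 : p ≤ 2) (hCp : 0 < Cp)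
    (hr0 : ∀ i, 0 ≤ r i) (hr2 : ∀ i, r i ≤ 2)
    (hrlim : Tendsto (fun i : ℕ => (i : ℝ) ^ (p / 2) * r i) atTop (nhds Cp))
    {ε : ℝ} (hε : 0 < ε) :
    ∀ᶠ m : ℕ in atTop, ∀ x : ℝ, 0 ≤ x → x ≤ 1 →
      (m:ℝ) ^ (p/2) * (x ^ p * ∑ i ∈ Finset.range (m+1), bw m i x * r i)
        ≤ (Cp + ε) * x ^ (p/2) + ε := by
  set s : ℝ := p/2 with hs
  have hs0 : (0:ℝ) < s := by rw [hs]; linarith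
  have hs1 : s ≤ 1 := by rw [hs]; linarith
  have hsp : s + s = p := by rw [hs]; ring
  have htail : ∀ᶠ i : ℕ in atTop, (i:ℝ) ^ s * r i ≤ Cp + ε/2 :=
    hrlim.eventually_le_const (by linarith)
  obtain ⟨N₀, hN₀⟩ := eventually_atTop.mp htail
  obtain ⟨N₁, hN₁⟩ := exists_nat_ge ((Cp + ε/2) * 2 / ε)
  set N : ℕ := max (max N₀ 1) N₁ with hNdef
  have hN0le : N₀ ≤ N := le_trans (le_max_left _ _) (le_max_left _ _)
  have hN1 : 1 ≤ N := le_trans (le_max_right _ _) (le_max_left _ _)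
  have hNpos : (0:ℝ) < N := by exact_mod_cast hN1
  have hNbig : (Cp + ε/2) * (1 + 1/(N:ℝ)) ≤ Cp + ε := by
    have h1 : ((Cp + ε/2) * 2 / ε) ≤ (N:ℝ) := le_trans hN₁ (by exact_mod_cast le_max_right _ _)
    have h2 : (Cp + ε/2) * 2 ≤ ε * N := by
      rw [div_le_iff₀ hε] at h1; linarith
    have h3 : (Cp + ε/2) / N ≤ ε/2 := by
      rw [div_le_iff₀ hNpos]; nlinarith
    have h4 : (Cp + ε/2) * (1 + 1/(N:ℝ)) = (Cp + ε/2) + (Cp + ε/2)/N := by ring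
    linarith
  set c₁ : ℝ := ∑ i ∈ Finset.range N, 2 * (p + i) ^ (p + (i:ℝ)) with hc₁def
  have hhead0 : Tendsto (fun m : ℕ => c₁ * (m:ℝ) ^ (-(1/2) : ℝ)) atTop (nhds 0) := by
    have h1 : Tendsto (fun m : ℕ => (m:ℝ) ^ (-(1/2) : ℝ)) atTop (nhds 0) :=
      (tendsto_rpow_neg_atTop (by norm_num : (0:ℝ) < 1/2)).comp tendsto_natCast_atTop_atTop
    simpa using h1.const_mul c₁
  filter_upwards [eventually_ge_atTop 1, hhead0.eventually_le_const hε] with m hm1 hm2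
  intro x hx0' hx1
  rcases eq_or_lt_of_le hx0' with hx0|hx0
  · rw [← hx0, Real.zero_rpow (by positivity : s ≠ 0), Real.zero_rpow (by positivity : p ≠ 0),
      zero_mul, mul_zero, mul_zero]
    positivity
  have hmR : (0:ℝ) < m := by exact_mod_cast hm1
  have h1x : (0:ℝ) ≤ 1 - x := by linarith
  rw [← Finset.sum_filter_add_sum_filter_not (Finset.range (m+1)) (fun i => i < N)
    (fun i => bw m i x * r i)]
  set S₁ := ∑ i ∈ (Finset.range (m+1)).filter (fun i => i < N), bw m i x * r i with hS₁def
  set S₂ := ∑ i ∈ (Finset.range (m+1)).filter (fun i => ¬ i < N), bw m i x * r i with hS₂def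
  -- head bound
  have hterm : ∀ i ∈ (Finset.range (m+1)).filter (fun i => i < N),
      (m:ℝ)^s * x^p * (bw m i x * r i) ≤ (2 * (p + i) ^ (p + (i:ℝ))) * (m:ℝ)^(-(1/2):ℝ) := by
    intro i hi
    have him : i ≤ m := by
      have := Finset.mem_range.mp (Finset.mem_filter.mp hi).1; omega
    have ha : (0:ℝ) < p + i := by positivity
    have hb : (0:ℝ) ≤ bw m i x := bw_nonneg hx0.le hx1
    have h1 : bw m i x * r i ≤ 2 * ((m.choose i : ℝ) * (x ^ i * (1-x)^(m-i))) := by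
      calc bw m i x * r i ≤ bw m i x * 2 := mul_le_mul_of_nonneg_left (hr2 i) hb
        _ = 2 * ((m.choose i : ℝ) * (x ^ i * (1-x)^(m-i))) := by rw [bw]; ring
    have hxpi : x ^ p * x ^ i = x ^ (p + (i:ℝ)) := by
      rw [← Real.rpow_natCast x i, ← Real.rpow_add hx0]
    have h3 : x ^ (p + (i:ℝ)) * (1-x)^(m-i) ≤ ((p+i) / m) ^ (p + (i:ℝ)) := by
      refine (xa_bound hx0.le hx1 ha (m - i)).trans ?_
      have hcast : ((m - i : ℕ) : ℝ) = (m:ℝ) - i := by rw [Nat.cast_sub him]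
      apply Real.rpow_le_rpow (by positivity) _ ha.le
      rw [hcast]
      apply div_le_div_of_nonneg_left ha.le hmR
      linarith
    have h4 : ((p+i) / m) ^ (p + (i:ℝ)) = (p+i) ^ (p+(i:ℝ)) / (m:ℝ) ^ (p+(i:ℝ)) :=
      Real.div_rpow ha.le hmR.le _
    have h5 : (m.choose i : ℝ) ≤ (m:ℝ)^i := by exact_mod_cast Nat.choose_le_pow m i
    have hmsi : (m:ℝ)^s * ((m:ℝ)^i / (m:ℝ)^(p+(i:ℝ))) = (m:ℝ)^(-s) := by
      rw [← Real.rpow_natCast (m:ℝ) i, ← Real.rpow_sub hmR, ← Real.rpow_add hmR]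
      congr 1
      linarith
    calc (m:ℝ)^s * x^p * (bw m i x * r i)
        ≤ (m:ℝ)^s * x^p * (2 * ((m.choose i : ℝ) * (x ^ i * (1-x)^(m-i)))) := by
          apply mul_le_mul_of_nonneg_left h1 (by positivity)
      _ = 2 * (m.choose i : ℝ) * ((m:ℝ)^s * (x ^ (p+(i:ℝ)) * (1-x)^(m-i))) := by
          rw [← hxpi]; ring
      _ ≤ 2 * (m.choose i : ℝ) * ((m:ℝ)^s * (((p+i) / m) ^ (p + (i:ℝ)))) := by
          have hnn : (0:ℝ) ≤ 2 * (m.choose i : ℝ) := by positivity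
          exact mul_le_mul_of_nonneg_left (mul_le_mul_of_nonneg_left h3 (by positivity)) hnn
      _ ≤ 2 * (m:ℝ)^i * ((m:ℝ)^s * (((p+i) / m) ^ (p + (i:ℝ)))) := by
          have hnn : (0:ℝ) ≤ (m:ℝ)^s * (((p+i) / m) ^ (p + (i:ℝ))) := by positivity
          apply mul_le_mul_of_nonneg_right _ hnn
          linarith
      _ = 2 * (p+i)^(p+(i:ℝ)) * ((m:ℝ)^s * ((m:ℝ)^i / (m:ℝ)^(p+(i:ℝ)))) := by
          rw [h4]; ring
      _ = 2 * (p+i)^(p+(i:ℝ)) * (m:ℝ)^(-s) := by rw [hmsi]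
      _ ≤ 2 * (p+i)^(p+(i:ℝ)) * (m:ℝ)^(-(1/2):ℝ) := by
          have hnn : (0:ℝ) ≤ 2 * (p+i)^(p+(i:ℝ)) := by positivity
          apply mul_le_mul_of_nonneg_left _ hnn
          apply Real.rpow_le_rpow_of_exponent_le (by exact_mod_cast hm1)
          linarith
  have Hhead : (m:ℝ)^s * x^p * S₁ ≤ c₁ * (m:ℝ)^(-(1/2):ℝ) := by
    have he : (m:ℝ)^s * x^p * S₁
        = ∑ i ∈ (Finset.range (m+1)).filter (fun i => i < N),
            (m:ℝ)^s * x^p * (bw m i x * r i) := by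
      rw [hS₁def, Finset.mul_sum]
    rw [he]
    calc ∑ i ∈ (Finset.range (m+1)).filter (fun i => i < N),
            (m:ℝ)^s * x^p * (bw m i x * r i)
        ≤ ∑ i ∈ (Finset.range (m+1)).filter (fun i => i < N),
            (2 * (p + i) ^ (p + (i:ℝ))) * (m:ℝ)^(-(1/2):ℝ) := Finset.sum_le_sum hterm
      _ ≤ ∑ i ∈ Finset.range N, (2 * (p + i) ^ (p + (i:ℝ))) * (m:ℝ)^(-(1/2):ℝ) := by
          apply Finset.sum_le_sum_of_subset_of_nonneg
          · intro i hi
            exact Finset.mem_range.mpr (Finset.mem_filter.mp hi).2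
          · intro i _ _
            positivity
      _ = c₁ * (m:ℝ)^(-(1/2):ℝ) := by rw [hc₁def, Finset.sum_mul]
  -- tail bound
  have hterm2 : ∀ i ∈ (Finset.range (m+1)).filter (fun i => ¬ i < N),
      bw m i x * r i
        ≤ ((Cp + ε/2) * (1 + 1/(N:ℝ))^s) * (bw m i x * (((i:ℝ)+1)⁻¹)^s) := by
    intro i hi
    have hNi : N ≤ i := Nat.le_of_not_lt (Finset.mem_filter.mp hi).2
    have hiR : (N:ℝ) ≤ i := by exact_mod_cast hNi
    have hi0 : (0:ℝ) < i := lt_of_lt_of_le hNpos hiR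
    have hb : (0:ℝ) ≤ bw m i x := bw_nonneg hx0.le hx1
    have hip : (0:ℝ) < (i:ℝ)^s := Real.rpow_pos_of_pos hi0 s
    have hri : r i ≤ (Cp + ε/2) * ((i:ℝ)^s)⁻¹ := by
      have h6 := hN₀ i (le_trans hN0le hNi)
      rw [← div_eq_mul_inv, le_div_iff₀ hip]
      linarith [h6]
    have hinv : ((i:ℝ)^s)⁻¹ ≤ (1 + 1/(N:ℝ))^s * (((i:ℝ)+1)⁻¹)^s := by
      have h7 : ((i:ℝ)⁻¹)^s = ((i:ℝ)^s)⁻¹ := Real.inv_rpow hi0.le s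
      have h8 : (i:ℝ)⁻¹ ≤ (1 + 1/(N:ℝ)) * ((i:ℝ)+1)⁻¹ := by
        rw [inv_eq_one_div, ← div_eq_mul_inv, div_le_div_iff₀ hi0 (by positivity)]
        have h9 : 1 ≤ (i:ℝ)/N := (le_div_iff₀ hNpos).mpr (by linarith)
        have h10 : (i:ℝ)/(N:ℝ) = (i:ℝ) * (1/N) := by ring
        nlinarith
      calc ((i:ℝ)^s)⁻¹ = ((i:ℝ)⁻¹)^s := h7.symm
        _ ≤ ((1 + 1/(N:ℝ)) * ((i:ℝ)+1)⁻¹)^s := by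
            apply Real.rpow_le_rpow (by positivity) h8 hs0.le
        _ = (1 + 1/(N:ℝ))^s * (((i:ℝ)+1)⁻¹)^s := by
            apply Real.mul_rpow (by positivity) (by positivity)
    calc bw m i x * r i ≤ bw m i x * ((Cp + ε/2) * ((i:ℝ)^s)⁻¹) :=
          mul_le_mul_of_nonneg_left hri hb
      _ ≤ bw m i x * ((Cp + ε/2) * ((1 + 1/(N:ℝ))^s * (((i:ℝ)+1)⁻¹)^s)) := by
          apply mul_le_mul_of_nonneg_left _ hb
          apply mul_le_mul_of_nonneg_left hinv (by positivity)
      _ = ((Cp + ε/2) * (1 + 1/(N:ℝ))^s) * (bw m i x * (((i:ℝ)+1)⁻¹)^s) := by ring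
  have HtailSum : S₂ ≤ ((Cp + ε/2) * (1 + 1/(N:ℝ))^s) * ((((m:ℝ)+1)*x)⁻¹)^s := by
    have hco : (0:ℝ) ≤ (Cp + ε/2) * (1 + 1/(N:ℝ))^s := by positivity
    calc S₂ ≤ ∑ i ∈ (Finset.range (m+1)).filter (fun i => ¬ i < N),
            ((Cp + ε/2) * (1 + 1/(N:ℝ))^s) * (bw m i x * (((i:ℝ)+1)⁻¹)^s) :=
          Finset.sum_le_sum hterm2
      _ = ((Cp + ε/2) * (1 + 1/(N:ℝ))^s) * ∑ i ∈ (Finset.range (m+1)).filter (fun i => ¬ i < N),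
            bw m i x * (((i:ℝ)+1)⁻¹)^s := by rw [Finset.mul_sum]
      _ ≤ ((Cp + ε/2) * (1 + 1/(N:ℝ))^s) * ∑ i ∈ Finset.range (m+1),
            bw m i x * (((i:ℝ)+1)⁻¹)^s := by
          apply mul_le_mul_of_nonneg_left _ hco
          apply Finset.sum_le_sum_of_subset_of_nonneg (Finset.filter_subset _ _)
          intro i _ _
          have hb : (0:ℝ) ≤ bw m i x := bw_nonneg hx0.le hx1
          positivity
      _ ≤ ((Cp + ε/2) * (1 + 1/(N:ℝ))^s) * (∑ i ∈ Finset.range (m+1),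
            bw m i x * ((i:ℝ)+1)⁻¹)^s := by
          apply mul_le_mul_of_nonneg_left _ hco
          exact jensen_concave _ _ _ (fun i _ => bw_nonneg hx0.le hx1) (sum_bw m x)
            (fun i _ => by positivity) hs0 hs1
      _ ≤ ((Cp + ε/2) * (1 + 1/(N:ℝ))^s) * ((((m:ℝ)+1)*x)⁻¹)^s := by
          apply mul_le_mul_of_nonneg_left _ hco
          apply Real.rpow_le_rpow _ (sum_bw_div m x hx0 hx1) hs0.le
          apply Finset.sum_nonneg
          intro i _
          have hb : (0:ℝ) ≤ bw m i x := bw_nonneg hx0.le hx1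
          positivity
  have Htail : (m:ℝ)^s * x^p * S₂ ≤ (Cp + ε) * x^s := by
    have hmono := mul_le_mul_of_nonneg_left HtailSum
      (show (0:ℝ) ≤ (m:ℝ)^s * x^p by positivity)
    refine le_trans hmono ?_
    have hxs : (0:ℝ) < x^s := Real.rpow_pos_of_pos hx0 s
    have hm1p : (0:ℝ) < ((m:ℝ)+1)^s := by positivity
    have hkey : (m:ℝ)^s * x^p * ((((m:ℝ)+1)*x)⁻¹)^s ≤ x^s := by
      have h1 : ((((m:ℝ)+1)*x)⁻¹)^s = (((m:ℝ)+1)^s)⁻¹ * (x^s)⁻¹ := by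
        rw [Real.inv_rpow (by positivity), Real.mul_rpow (by positivity) hx0.le, mul_inv]
      have h2 : (m:ℝ)^s ≤ ((m:ℝ)+1)^s := Real.rpow_le_rpow hmR.le (by linarith) hs0.le
      have h3 : x^p = x^s * x^s := by rw [← Real.rpow_add hx0, hsp]
      rw [h1, h3]
      have h4 : (m:ℝ)^s * (x^s * x^s) * ((((m:ℝ)+1)^s)⁻¹ * (x^s)⁻¹)
          = x^s * ((m:ℝ)^s / ((m:ℝ)+1)^s) := by field_simp
      rw [h4]
      have h5 : (m:ℝ)^s / ((m:ℝ)+1)^s ≤ 1 := (div_le_one hm1p).mpr h2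
      nlinarith
    have hcoef : (Cp + ε/2) * (1 + 1/(N:ℝ))^s ≤ Cp + ε := by
      have h5 : (1 + 1/(N:ℝ))^s ≤ 1 + 1/(N:ℝ) := by
        have h9 : (0:ℝ) ≤ 1/(N:ℝ) := by positivity
        have h6 := Real.rpow_le_rpow_of_exponent_le
          (show (1:ℝ) ≤ 1 + 1/(N:ℝ) by linarith) hs1
        rwa [Real.rpow_one] at h6
      have h7 : (0:ℝ) < Cp + ε/2 := by linarith
      calc (Cp + ε/2) * (1 + 1/(N:ℝ))^s ≤ (Cp + ε/2) * (1 + 1/(N:ℝ)) :=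
            mul_le_mul_of_nonneg_left h5 h7.le
        _ ≤ Cp + ε := hNbig
    calc (m:ℝ)^s * x^p * ((Cp + ε/2) * (1 + 1/(N:ℝ))^s * ((((m:ℝ)+1)*x)⁻¹)^s)
        = ((Cp + ε/2) * (1 + 1/(N:ℝ))^s) * ((m:ℝ)^s * x^p * ((((m:ℝ)+1)*x)⁻¹)^s) := by ring
      _ ≤ ((Cp + ε/2) * (1 + 1/(N:ℝ))^s) * (x^s) := by
          apply mul_le_mul_of_nonneg_left hkey (by positivity)
      _ ≤ (Cp + ε) * x^s := mul_le_mul_of_nonneg_right hcoef hxs.le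
  have hfin : (m:ℝ)^s * (x^p * (S₁ + S₂)) = (m:ℝ)^s * x^p * S₁ + (m:ℝ)^s * x^p * S₂ := by
    ring
  rw [hfin]
  linarith

set_option maxHeartbeats 1000000 in
lemma lower {p Cp : ℝ} {r : ℕ → ℝ} (hp1 : 1 ≤ p) (hp2 : p ≤ 2) (hCp : 0 < Cp)
    (hr0 : ∀ i, 0 ≤ r i)
    (hrlim : Tendsto (fun i : ℕ => (i : ℝ) ^ (p / 2) * r i) atTop (nhds Cp))
    {x₀ : ℝ} (hx0 : 0 < x₀) (hx1 : x₀ ≤ 1) {δ : ℝ} (hδ : 0 < δ) :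
    ∀ᶠ m : ℕ in atTop,
      Cp * x₀ ^ (p/2) - δ
        ≤ (m:ℝ) ^ (p/2) * (x₀ ^ p * ∑ i ∈ Finset.range (m+1), bw m i x₀ * r i) := by
  set s : ℝ := p/2 with hs
  have hs0 : (0:ℝ) < s := by rw [hs]; linarith
  have hs1 : s ≤ 1 := by rw [hs]; linarith
  have hsp : s + s = p := by rw [hs]; ring
  set c : ℝ := x₀ ^ s with hcdef
  have hc : 0 < c := Real.rpow_pos_of_pos hx0 s
  -- choice of η
  set η : ℝ := min (min (1/2) Cp) (δ/(2*(1+Cp)*c)) with hηdef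
  have hη0 : 0 < η := by
    exact lt_min (lt_min (by norm_num) hCp) (div_pos hδ (mul_pos (by positivity) hc))
  have hηhalf : η ≤ 1/2 := le_trans (min_le_left _ _) (min_le_left _ _)
  have hηC : η ≤ Cp := le_trans (min_le_left _ _) (min_le_right _ _)
  have hηδ : η * ((1+Cp)*c) ≤ δ/2 := by
    have h1 : η ≤ δ/(2*(1+Cp)*c) := min_le_right _ _
    have h2 : (0:ℝ) < (1+Cp)*c := by positivity
    calc η * ((1+Cp)*c) ≤ (δ/(2*(1+Cp)*c)) * ((1+Cp)*c) :=
          mul_le_mul_of_nonneg_right h1 h2.le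
      _ = δ/2 := by field_simp
  have h1η : (0:ℝ) < 1 + η := by linarith
  have h1ηs : (0:ℝ) < (1+η)^s := Real.rpow_pos_of_pos h1η s
  set A : ℝ := (Cp - η) * ((1+η)^s)⁻¹ with hAdef
  have hCη : 0 ≤ Cp - η := by linarith
  have h1ηs1 : (1:ℝ) ≤ (1+η)^s := Real.one_le_rpow (by linarith) hs0.le
  have h1ηsle : (1+η)^s ≤ 1+η := by
    have h6 := Real.rpow_le_rpow_of_exponent_le (show (1:ℝ) ≤ 1+η by linarith) hs1
    rwa [Real.rpow_one] at h6
  have hA0 : 0 ≤ A := by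
    apply mul_nonneg hCη
    positivity
  have hA2 : A ≤ Cp := by
    have h7 : ((1+η)^s)⁻¹ ≤ 1 := by
      rw [inv_le_one_iff₀]; right; exact h1ηs1
    calc A ≤ (Cp - η) * 1 := mul_le_mul_of_nonneg_left h7 hCη
      _ ≤ Cp := by linarith
  have hA1 : Cp * c - δ/2 ≤ A * c := by
    have h8 : 1 - η ≤ ((1+η)^s)⁻¹ := by
      have h8a : 1 - η ≤ (1+η)⁻¹ := by
        rw [inv_eq_one_div, le_div_iff₀ h1η]; nlinarith
      have h8b : (1+η)⁻¹ ≤ ((1+η)^s)⁻¹ := by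
        apply inv_anti₀ h1ηs h1ηsle
      linarith
    have h9 : (Cp - η) * (1 - η) ≤ A :=
      mul_le_mul_of_nonneg_left h8 hCη
    have h10 : Cp - η*(1+Cp) ≤ (Cp - η) * (1 - η) := by nlinarith
    have h11 : (Cp - η*(1+Cp)) * c ≤ A * c := by
      apply mul_le_mul_of_nonneg_right (le_trans h10 h9) hc.le
    have h12 : Cp * c - η*((1+Cp)*c) = (Cp - η*(1+Cp)) * c := by ring
    linarith
  -- get N from hrlim
  have hev : ∀ᶠ i : ℕ in atTop, Cp - η ≤ (i:ℝ)^s * r i :=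
    hrlim.eventually_const_le (by linarith)
  obtain ⟨N₂, hN₂⟩ := eventually_atTop.mp hev
  set N' : ℕ := max N₂ 1 with hN'def
  -- eventual conditions
  have hev2 : ∀ᶠ m : ℕ in atTop, (N':ℝ) ≤ (1-η)*((m:ℝ)*x₀) := by
    have ht : Tendsto (fun m : ℕ => (1-η)*((m:ℝ)*x₀)) atTop atTop := by
      apply Tendsto.const_mul_atTop (by linarith : (0:ℝ) < 1-η)
      exact Tendsto.atTop_mul_const hx0 tendsto_natCast_atTop_atTop
    exact ht.eventually_ge_atTop _
  have hev3 : ∀ᶠ m : ℕ in atTop, Cp * c * ((η^2 * ((m:ℝ) * x₀))⁻¹) ≤ δ/2 := by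
    have ht : Tendsto (fun m : ℕ => Cp * c * ((η^2 * ((m:ℝ) * x₀))⁻¹)) atTop (nhds 0) := by
      have ht1 : Tendsto (fun m : ℕ => η^2 * ((m:ℝ) * x₀)) atTop atTop := by
        apply Tendsto.const_mul_atTop (by positivity : (0:ℝ) < η^2)
        exact Tendsto.atTop_mul_const hx0 tendsto_natCast_atTop_atTop
      have ht2 := ht1.inv_tendsto_atTop
      simpa using ht2.const_mul (Cp * c)
    exact ht.eventually_le_const (by linarith)
  filter_upwards [eventually_ge_atTop 1, hev2, hev3] with m hm1 hm2 hm3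
  have hmR : (0:ℝ) < m := by exact_mod_cast hm1
  have hmx : (0:ℝ) < (m:ℝ)*x₀ := by positivity
  set t : ℝ := η * ((m:ℝ)*x₀) with htdef
  have ht0 : 0 < t := by positivity
  set em : ℝ := (η^2 * ((m:ℝ) * x₀))⁻¹ with hemdef
  have hem0 : 0 ≤ em := by positivity
  -- Chebyshev: bad set small
  have hbad : ∑ i ∈ (Finset.range (m+1)).filter (fun i : ℕ => t ≤ |(m:ℝ)*x₀ - (i:ℝ)|),
      bw m i x₀ ≤ em := by
    refine (cheb m x₀ t hx0.le hx1 ht0).trans ?_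
    rw [hemdef, htdef, div_le_iff₀ (by positivity : (0:ℝ) < (η*((m:ℝ)*x₀))^2)]
    have hη' : η ≠ 0 := hη0.ne'
    have hmx' : (m:ℝ)*x₀ ≠ 0 := hmx.ne'
    have he33 : (η^2*((m:ℝ)*x₀))⁻¹ * (η*((m:ℝ)*x₀))^2 = (m:ℝ)*x₀ := by
      field_simp
    rw [he33]
    have h30 : (0:ℝ) ≤ (m:ℝ)*x₀ := by positivity
    calc (m:ℝ)*x₀*(1-x₀) ≤ (m:ℝ)*x₀*1 := mul_le_mul_of_nonneg_left (by linarith) h30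
      _ = (m:ℝ)*x₀ := mul_one _
  have hsplit := Finset.sum_filter_add_sum_filter_not (Finset.range (m+1))
    (fun i : ℕ => t ≤ |(m:ℝ)*x₀ - (i:ℝ)|) (fun i => bw m i x₀)
  have hgood : 1 - em ≤ ∑ i ∈ (Finset.range (m+1)).filter
      (fun i : ℕ => ¬ t ≤ |(m:ℝ)*x₀ - (i:ℝ)|), bw m i x₀ := by
    have h1 := sum_bw m x₀
    linarith [hbad, hsplit.trans h1]
  set T : ℝ := (1+η) * ((m:ℝ)*x₀) with hTdef
  have hT0 : 0 < T := by positivity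
  have hTs : 0 < T^s := Real.rpow_pos_of_pos hT0 s
  -- pointwise lower bound on good set
  have hterm : ∀ i ∈ (Finset.range (m+1)).filter
      (fun i : ℕ => ¬ t ≤ |(m:ℝ)*x₀ - (i:ℝ)|),
      ((Cp - η) * (T^s)⁻¹) * bw m i x₀ ≤ bw m i x₀ * r i := by
    intro i hi
    have habs : |(m:ℝ)*x₀ - (i:ℝ)| < t := lt_of_not_ge (Finset.mem_filter.mp hi).2
    have habs1 : (m:ℝ)*x₀ - (i:ℝ) < t := lt_of_le_of_lt (le_abs_self _) habs
    have habs2 : (i:ℝ) - (m:ℝ)*x₀ < t := by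
      have := lt_of_le_of_lt (neg_le_abs _) habs
      linarith [lt_of_le_of_lt (le_abs_self ((i:ℝ) - (m:ℝ)*x₀)) (by rwa [abs_sub_comm])]
    have hilow : (1-η)*((m:ℝ)*x₀) < (i:ℝ) := by
      rw [htdef] at habs1
      have he30 : (1-η)*((m:ℝ)*x₀) = (m:ℝ)*x₀ - η*((m:ℝ)*x₀) := by ring
      linarith
    have hihigh : (i:ℝ) < T := by
      rw [htdef] at habs2; rw [hTdef]
      have he31 : (1+η)*((m:ℝ)*x₀) = (m:ℝ)*x₀ + η*((m:ℝ)*x₀) := by ring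
      linarith
    have hiN' : (N':ℝ) ≤ i := le_of_lt (lt_of_le_of_lt hm2 hilow)
    have hiN'' : N' ≤ i := by exact_mod_cast hiN'
    have hi1 : 1 ≤ i := le_trans (le_max_right N₂ 1) hiN''
    have hi0 : (0:ℝ) < i := by exact_mod_cast hi1
    have his : (0:ℝ) < (i:ℝ)^s := Real.rpow_pos_of_pos hi0 s
    have hri : (Cp - η) * (T^s)⁻¹ ≤ r i := by
      have h20 := hN₂ i (le_trans (le_max_left N₂ 1) hiN'')
      have h21 : (i:ℝ)^s ≤ T^s := Real.rpow_le_rpow hi0.le hihigh.le hs0.le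
      have h22 : (T^s)⁻¹ ≤ ((i:ℝ)^s)⁻¹ := inv_anti₀ his h21
      have h23 : (Cp - η) * (T^s)⁻¹ ≤ (Cp - η) * ((i:ℝ)^s)⁻¹ :=
        mul_le_mul_of_nonneg_left h22 hCη
      refine h23.trans ?_
      rw [← div_eq_mul_inv, div_le_iff₀ his]
      have he32 : (i:ℝ)^s * r i = r i * (i:ℝ)^s := by ring
      linarith
    have hb : (0:ℝ) ≤ bw m i x₀ := bw_nonneg hx0.le hx1
    calc ((Cp - η) * (T^s)⁻¹) * bw m i x₀ ≤ r i * bw m i x₀ :=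
          mul_le_mul_of_nonneg_right hri hb
      _ = bw m i x₀ * r i := by ring
  -- assemble sum lower bound
  have hsum : ((Cp - η) * (T^s)⁻¹) * (1 - em)
      ≤ ∑ i ∈ Finset.range (m+1), bw m i x₀ * r i := by
    have hco : (0:ℝ) ≤ (Cp - η) * (T^s)⁻¹ := by positivity
    calc ((Cp - η) * (T^s)⁻¹) * (1 - em)
        ≤ ((Cp - η) * (T^s)⁻¹) * ∑ i ∈ (Finset.range (m+1)).filter
            (fun i : ℕ => ¬ t ≤ |(m:ℝ)*x₀ - (i:ℝ)|), bw m i x₀ :=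
          mul_le_mul_of_nonneg_left hgood hco
      _ = ∑ i ∈ (Finset.range (m+1)).filter
            (fun i : ℕ => ¬ t ≤ |(m:ℝ)*x₀ - (i:ℝ)|), ((Cp - η) * (T^s)⁻¹) * bw m i x₀ := by
          rw [Finset.mul_sum]
      _ ≤ ∑ i ∈ (Finset.range (m+1)).filter
            (fun i : ℕ => ¬ t ≤ |(m:ℝ)*x₀ - (i:ℝ)|), bw m i x₀ * r i :=
          Finset.sum_le_sum hterm
      _ ≤ ∑ i ∈ Finset.range (m+1), bw m i x₀ * r i := by
          apply Finset.sum_le_sum_of_subset_of_nonneg (Finset.filter_subset _ _)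
          intro i _ _
          exact mul_nonneg (bw_nonneg hx0.le hx1) (hr0 i)
  -- multiply by m^s x₀^p and compute
  have hms : (0:ℝ) < (m:ℝ)^s := Real.rpow_pos_of_pos hmR s
  have hxs : (0:ℝ) < x₀^s := hc
  have hcomp : (m:ℝ)^s * x₀^p * (T^s)⁻¹ = c * ((1+η)^s)⁻¹ := by
    have hT1 : T^s = (1+η)^s * ((m:ℝ)^s * x₀^s) := by
      rw [hTdef, Real.mul_rpow h1η.le hmx.le, Real.mul_rpow hmR.le hx0.le]
    have hxp : x₀^p = x₀^s * x₀^s := by rw [← Real.rpow_add hx0, hsp]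
    rw [hT1, hxp, hcdef]
    field_simp
  have hmain := mul_le_mul_of_nonneg_left hsum (show (0:ℝ) ≤ (m:ℝ)^s * x₀^p by positivity)
  have hmain2 : (A * c) * (1 - em)
      ≤ (m:ℝ)^s * (x₀^p * ∑ i ∈ Finset.range (m+1), bw m i x₀ * r i) := by
    have he : (m:ℝ)^s * x₀^p * (((Cp - η) * (T^s)⁻¹) * (1 - em))
        = ((Cp - η) * ((m:ℝ)^s * x₀^p * (T^s)⁻¹)) * (1 - em) := by ring
    rw [he, hcomp] at hmain
    have he2 : (Cp - η) * (c * ((1+η)^s)⁻¹) = A * c := by rw [hAdef]; ring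
    rw [he2] at hmain
    calc (A * c) * (1 - em) ≤ (m:ℝ)^s * x₀^p * ∑ i ∈ Finset.range (m+1), bw m i x₀ * r i :=
          hmain
      _ = (m:ℝ)^s * (x₀^p * ∑ i ∈ Finset.range (m+1), bw m i x₀ * r i) := by ring
  have hAce : A * c * em ≤ Cp * c * em :=
    mul_le_mul_of_nonneg_right (mul_le_mul_of_nonneg_right hA2 hc.le) hem0
  have hexp : (A * c) * (1 - em) = A * c - A * c * em := by ring
  rw [hexp] at hmain2
  have hfin : Cp * x₀ ^ s - δ ≤ Cp * c - δ := by rw [hcdef]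
  linarith


end Stmt17

open Stmt17

set_option maxHeartbeats 1000000 in
theorem stmt_17 (p Cp : ℝ) (hp1 : 1 ≤ p) (hp2 : p ≤ 2) (hCp : 0 < Cp)
    (r : ℕ → ℝ) (hr0 : ∀ i, 0 ≤ r i) (hr2 : ∀ i, r i ≤ 2)
    (hrlim : Tendsto (fun i : ℕ => (i : ℝ) ^ (p / 2) * r i) atTop (nhds Cp))
    (𝒳 : Type*) [Fintype 𝒳] [Nonempty 𝒳] (k : ℕ) (hk : k = Fintype.card 𝒳)
    (F : ℕ → (𝒳 → ℝ) → ℝ)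
    (hF : ∀ m q, F m q = ∑ x, ∑ i ∈ Finset.range (m + 1),
        (m.choose i : ℝ) * (q x) ^ ((i : ℝ) + p) * (1 - q x) ^ (m - i) * r i) :
    Tendsto
      (fun m : ℕ =>
        (m : ℝ) ^ (p / 2) *
          sSup {v : ℝ | ∃ q : 𝒳 → ℝ, (∀ x, 0 ≤ q x) ∧ (∑ x, q x) = 1 ∧ v = F m q})
      atTop (nhds (Cp * (k : ℝ) ^ (1 - p / 2))) := by
  have hs0 : (0:ℝ) < p/2 := by linarith
  have hs1 : p/2 ≤ 1 := by linarith
  have hk1 : 1 ≤ k := by rw [hk]; exact Fintype.card_pos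
  have hkR : (0:ℝ) < k := by exact_mod_cast hk1
  have hcard : (Fintype.card 𝒳 : ℝ) = (k:ℝ) := by rw [hk]
  -- rewrite of F on the simplex
  have hFeq : ∀ (m : ℕ) (q : 𝒳 → ℝ), (∀ x, 0 ≤ q x) → F m q
      = ∑ x, (q x)^p * ∑ i ∈ Finset.range (m+1), bw m i (q x) * r i := by
    intro m q hq
    rw [hF]
    apply Finset.sum_congr rfl
    intro x _
    rw [Finset.mul_sum]
    apply Finset.sum_congr rfl
    intro i _
    have hy := hq x
    have hsplit : (q x) ^ ((i:ℝ) + p) = (q x)^p * (q x)^i := by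
      rcases eq_or_lt_of_le hy with h|h
      · rw [← h]
        rw [Real.zero_rpow (by positivity : (i:ℝ) + p ≠ 0)]
        rcases Nat.eq_zero_or_pos i with h0|h0
        · subst h0
          rw [pow_zero, Real.zero_rpow (by positivity : p ≠ 0), mul_one]
        · rw [zero_pow h0.ne', mul_zero]
      · rw [Real.rpow_add h, Real.rpow_natCast]
        ring
    rw [hsplit, bw]
    ring
  -- the uniform distribution
  set qU : 𝒳 → ℝ := fun _ => (k:ℝ)⁻¹ with hqUdef
  have hqU0 : ∀ x, 0 ≤ qU x := fun x => by positivity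
  have hqUsum : (∑ x, qU x) = 1 := by
    rw [hqUdef]
    rw [Finset.sum_const, nsmul_eq_mul]
    simp only [Finset.card_univ, hcard]
    field_simp
  have hx0inv : (0:ℝ) < (k:ℝ)⁻¹ := by positivity
  have hx1inv : (k:ℝ)⁻¹ ≤ 1 := by
    rw [inv_le_one_iff₀]; right; exact_mod_cast hk1
  have hkid : (k:ℝ) * ((k:ℝ)⁻¹)^(p/2) = (k:ℝ)^(1-p/2) := by
    rw [Real.inv_rpow hkR.le, Real.rpow_sub hkR, Real.rpow_one]
    ring
  -- setup for tendsto
  rw [Metric.tendsto_nhds]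
  intro ε hε
  set L : ℝ := Cp * (k:ℝ)^(1-p/2) with hLdef
  have hkp0 : (0:ℝ) < (k:ℝ)^(1-p/2) := Real.rpow_pos_of_pos hkR _
  set δ : ℝ := ε / (2*((k:ℝ)^(1-p/2) + k)) with hδdef
  have hδ0 : 0 < δ := by
    rw [hδdef]
    apply div_pos hε
    positivity
  have hδeq : δ * ((k:ℝ)^(1-p/2)) + k*δ = ε/2 := by
    rw [hδdef]
    field_simp
  set δ' : ℝ := ε / (2*k) with hδ'def
  have hδ'0 : 0 < δ' := by rw [hδ'def]; positivity
  have hδ'eq : (k:ℝ) * δ' = ε/2 := by rw [hδ'def]; field_simp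
  filter_upwards [upper hp1 hp2 hCp hr0 hr2 hrlim hδ0,
    lower hp1 hp2 hCp hr0 hrlim hx0inv hx1inv hδ'0,
    eventually_ge_atTop 1] with m hup hlow hm1
  have hmR : (0:ℝ) < m := by exact_mod_cast hm1
  have hms : (0:ℝ) < (m:ℝ)^(p/2) := Real.rpow_pos_of_pos hmR _
  set S : Set ℝ := {v : ℝ | ∃ q : 𝒳 → ℝ, (∀ x, 0 ≤ q x) ∧ (∑ x, q x) = 1 ∧ v = F m q}
    with hSdef
  have hmem : F m qU ∈ S := ⟨qU, hqU0, hqUsum, rfl⟩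
  -- upper bound on every element of S
  have hub : ∀ v ∈ S, v ≤ (L + ε/2) / (m:ℝ)^(p/2) := by
    rintro v ⟨q, hq0, hqsum, rfl⟩
    have hqle : ∀ x, q x ≤ 1 := by
      intro x
      have h := Finset.single_le_sum (f := q) (fun y _ => hq0 y) (Finset.mem_univ x)
      rwa [hqsum] at h
    rw [le_div_iff₀ hms, hFeq m q hq0, mul_comm, Finset.mul_sum]
    have hstep : ∀ x : 𝒳, x ∈ Finset.univ →
        (m:ℝ)^(p/2) * ((q x)^p * ∑ i ∈ Finset.range (m+1), bw m i (q x) * r i)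
          ≤ (Cp + δ) * (q x)^(p/2) + δ :=
      fun x _ => hup (q x) (hq0 x) (hqle x)
    calc ∑ x : 𝒳, (m:ℝ)^(p/2) * ((q x)^p * ∑ i ∈ Finset.range (m+1), bw m i (q x) * r i)
        ≤ ∑ x : 𝒳, ((Cp + δ) * (q x)^(p/2) + δ) := Finset.sum_le_sum hstep
      _ = (Cp + δ) * (∑ x : 𝒳, (q x)^(p/2)) + k * δ := by
          rw [Finset.sum_add_distrib, Finset.sum_const, ← Finset.mul_sum, nsmul_eq_mul,
            Finset.card_univ, hcard]
      _ ≤ (Cp + δ) * (k:ℝ)^(1-p/2) + k * δ := by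
          have hpows : ∑ x : 𝒳, (q x)^(p/2) ≤ (k:ℝ)^(1-p/2) := by
            have hj := jensen_concave Finset.univ (fun _ => (k:ℝ)⁻¹) q
              (fun i _ => by positivity) (by
                rw [Finset.sum_const, nsmul_eq_mul, Finset.card_univ, hcard]; field_simp)
              (fun i _ => hq0 i) hs0 hs1
            have he1 : ∑ x : 𝒳, (k:ℝ)⁻¹ * q x = (k:ℝ)⁻¹ := by
              rw [← Finset.mul_sum, hqsum, mul_one]
            have he2 : ∑ x : 𝒳, (k:ℝ)⁻¹ * (q x)^(p/2)
                = (k:ℝ)⁻¹ * ∑ x : 𝒳, (q x)^(p/2) := by rw [Finset.mul_sum]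
            rw [he1, he2] at hj
            have h3 := mul_le_mul_of_nonneg_left hj hkR.le
            rw [← mul_assoc, mul_inv_cancel₀ hkR.ne', one_mul, hkid] at h3
            exact h3
          apply add_le_add_left
          apply mul_le_mul_of_nonneg_left hpows (by linarith)
      _ ≤ L + ε/2 := by
          have : (Cp + δ) * (k:ℝ)^(1-p/2) = L + δ * (k:ℝ)^(1-p/2) := by
            rw [hLdef]; ring
          linarith [hδeq]
  have hbdd : BddAbove S := ⟨(L + ε/2) / (m:ℝ)^(p/2), fun v hv => hub v hv⟩
  have hne : S.Nonempty := ⟨F m qU, hmem⟩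
  have hsupub : sSup S ≤ (L + ε/2) / (m:ℝ)^(p/2) := csSup_le hne hub
  have hsuplb : F m qU ≤ sSup S := le_csSup hbdd hmem
  -- lower bound on F m qU
  have hFU : L - ε/2 ≤ (m:ℝ)^(p/2) * F m qU := by
    have he : F m qU = (k:ℝ) * (((k:ℝ)⁻¹)^p
        * ∑ i ∈ Finset.range (m+1), bw m i ((k:ℝ)⁻¹) * r i) := by
      rw [hFeq m qU hqU0, hqUdef]
      rw [Finset.sum_const, nsmul_eq_mul, Finset.card_univ, hcard]
    rw [he]
    have h4 : (m:ℝ)^(p/2) * ((k:ℝ) * (((k:ℝ)⁻¹)^p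
        * ∑ i ∈ Finset.range (m+1), bw m i ((k:ℝ)⁻¹) * r i))
        = (k:ℝ) * ((m:ℝ)^(p/2) * (((k:ℝ)⁻¹)^p
        * ∑ i ∈ Finset.range (m+1), bw m i ((k:ℝ)⁻¹) * r i)) := by ring
    rw [h4]
    have h5 := mul_le_mul_of_nonneg_left hlow hkR.le
    have h6 : (k:ℝ) * (Cp * ((k:ℝ)⁻¹)^(p/2) - δ') = L - ε/2 := by
      rw [hLdef, ← hδ'eq, ← hkid]; ring
    linarith
  -- conclude
  rw [Real.dist_eq, abs_lt]
  have hv1 : (m:ℝ)^(p/2) * sSup S ≤ L + ε/2 := by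
    have h7 := mul_le_mul_of_nonneg_left hsupub hms.le
    rwa [mul_div_cancel₀ _ hms.ne'] at h7
  have hv2 : L - ε/2 ≤ (m:ℝ)^(p/2) * sSup S := by
    have h8 := mul_le_mul_of_nonneg_left hsuplb hms.le
    linarith
  constructor <;> linarith
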